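/- Define φ(y,s) = f(y/√s) + 1/(4s) with f(z) = 8/(8+z^2), and R(y,s) = ∂_y^2 φ − (y/2)∂_y φ − φ + φ^2 − ∂_s φ. Then there exists C > 0 such that for all s ≥ 1, ‖R(·,s)‖_{L^∞(ℝ)} ≤ C/s. -/

import Mathlib

theorem stmt13 (f : ℝ → ℝ) (φ R : ℝ → ℝ → ℝ)
    (hf : ∀ z, f z = 8 / (8 + z ^ 2))
    (hφ : ∀ y s, φ y s = f (y / Real.sqrt s) + 1 / (4 * s))
    (hR : ∀ y s, R y s =
      deriv (deriv (fun y' => φ y' s)) y - (y / 2) * deriv (fun y' => φ y' s) y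
        - φ y s + (φ y s) ^ 2 - deriv (fun s' => φ y s') s) :
    ∃ C > (0 : ℝ), ∀ s ≥ (1 : ℝ), ∀ y : ℝ, |R y s| ≤ C / s := by
  refine ⟨1, one_pos, ?_⟩
  intro s hs y
  have hs0 : (0:ℝ) < s := lt_of_lt_of_le one_pos hs
  have hsne : s ≠ 0 := hs0.ne'
  -- rewrite φ · s as a rational function of y'
  have hφs : (fun y' => φ y' s) = fun y' => 8*s/(8*s+y'^2) + 1/(4*s) := by
    funext y'
    rw [hφ, hf, div_pow, Real.sq_sqrt hs0.le]
    have h1 : 8 + y'^2/s ≠ 0 := by positivity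
    have h2 : 8*s + y'^2 ≠ 0 := by positivity
    field_simp
  -- first y-derivative
  have hdy : ∀ t : ℝ, HasDerivAt (fun y' => φ y' s) (-16*s*t/(8*s+t^2)^2) t := by
    intro t
    rw [hφs]
    have hden : HasDerivAt (fun y' : ℝ => 8*s + y'^2) (2*t) t := by
      simpa using (hasDerivAt_pow 2 t).const_add (8*s)
    have h := ((hasDerivAt_const t (8*s)).fun_div hden (by positivity)).add_const (1/(4*s))
    refine h.congr_deriv ?_
    ring
  have hdy_eq : deriv (fun y' => φ y' s) = fun t => -16*s*t/(8*s+t^2)^2 :=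
    funext fun t => (hdy t).deriv
  -- second y-derivative
  have hDne : (8*s + y^2) ≠ 0 := by positivity
  have hdyy : HasDerivAt (fun t : ℝ => -16*s*t/(8*s+t^2)^2)
      ((48*s*y^2 - 128*s^2)/(8*s+y^2)^3) y := by
    have hnum : HasDerivAt (fun t : ℝ => -16*s*t) (-16*s) y := by
      simpa using (hasDerivAt_id y).const_mul (-16*s)
    have hd1 : HasDerivAt (fun t : ℝ => 8*s + t^2) (2*y) y := by
      simpa using (hasDerivAt_pow 2 y).const_add (8*s)
    have hden : HasDerivAt (fun t : ℝ => (8*s + t^2)^2) (2*(8*s+y^2)*(2*y)) y := by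
      have := hd1.fun_pow 2
      simpa [mul_comm, mul_assoc, mul_left_comm] using this
    have h := hnum.fun_div hden (by positivity)
    refine h.congr_deriv ?_
    field_simp
    ring
  -- s-derivative
  have hds : deriv (fun s' => φ y s') s = 8*y^2/(8*s+y^2)^2 - 1/(4*s^2) := by
    have hev : (fun s' => φ y s') =ᶠ[nhds s] (fun s' => 8*s'/(8*s'+y^2) + 1/(4*s')) := by
      filter_upwards [eventually_gt_nhds hs0] with s' hs'
      rw [hφ, hf, div_pow, Real.sq_sqrt hs'.le]
      have h1 : 8 + y^2/s' ≠ 0 := by positivity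
      have h2 : 8*s' + y^2 ≠ 0 := by positivity
      have h3 : s' ≠ 0 := hs'.ne'
      field_simp
    rw [hev.deriv_eq]
    have h1 : HasDerivAt (fun s' : ℝ => 8*s') 8 s := by
      simpa using (hasDerivAt_id s).const_mul (8:ℝ)
    have h2 : HasDerivAt (fun s' : ℝ => 8*s' + y^2) 8 s := h1.add_const (y^2)
    have h3 := h1.fun_div h2 (by positivity)
    have h4 : HasDerivAt (fun s' : ℝ => 1/(4*s')) (-1/(4*s^2)) s := by
      have hc : HasDerivAt (fun s' : ℝ => 4*s') 4 s := by
        simpa using (hasDerivAt_id s).const_mul (4:ℝ)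
      have h := (hasDerivAt_const s (1:ℝ)).fun_div hc (by positivity)
      refine h.congr_deriv ?_
      field_simp
      ring
    have h5 := h3.fun_add h4
    rw [h5.deriv]
    field_simp
    ring
  -- closed form for R
  have hφv : φ y s = 8*s/(8*s+y^2) + 1/(4*s) := by
    have := congrFun hφs y
    simpa using this
  have hRval : R y s = (5*y^6 + 120*s*y^4 - 4*s*y^6 + 960*s^2*y^2 - 160*s^2*y^4 + 2560*s^3)
      / (16*s^2*(8*s+y^2)^3) := by
    rw [hR y s, hds, hdy_eq, hφv]
    have h2 : deriv (fun t : ℝ => -16*s*t/(8*s+t^2)^2) y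
        = (48*s*y^2 - 128*s^2)/(8*s+y^2)^3 := hdyy.deriv
    rw [h2]
    field_simp
    ring
  -- bound
  have hpos : (0:ℝ) < 16*s^2*(8*s+y^2)^3 := by positivity
  have p2 : (0:ℝ) ≤ y^2 := sq_nonneg y
  have p4 : (0:ℝ) ≤ y^4 := by positivity
  have p6 : (0:ℝ) ≤ y^6 := by positivity
  have hs1 : (0:ℝ) ≤ s - 1 := by linarith
  have hNbound : |5*y^6 + 120*s*y^4 - 4*s*y^6 + 960*s^2*y^2 - 160*s^2*y^4 + 2560*s^3|
      ≤ 16*s*(8*s+y^2)^3 := by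
    rw [abs_le]
    constructor
    · nlinarith [mul_nonneg (pow_nonneg hs0.le 3) hs1, mul_nonneg hs0.le p6,
        mul_nonneg (mul_nonneg hs0.le hs0.le) p4, mul_nonneg (mul_nonneg hs0.le hs0.le) p2,
        mul_nonneg (mul_nonneg (mul_nonneg hs0.le hs0.le) hs0.le) p2,
        pow_nonneg hs0.le 4]
    · nlinarith [mul_nonneg (pow_nonneg hs0.le 3) hs1,
        mul_nonneg (mul_nonneg (mul_nonneg hs0.le hs0.le) p2) hs1,
        mul_nonneg (mul_nonneg hs0.le p4) hs1,
        mul_nonneg p6 hs1, mul_nonneg hs0.le p6,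
        mul_nonneg (mul_nonneg hs0.le hs0.le) p4,
        mul_nonneg (mul_nonneg (mul_nonneg hs0.le hs0.le) hs0.le) p2,
        pow_nonneg hs0.le 4]
  calc |R y s| = |5*y^6 + 120*s*y^4 - 4*s*y^6 + 960*s^2*y^2 - 160*s^2*y^4 + 2560*s^3|
        / (16*s^2*(8*s+y^2)^3) := by rw [hRval, abs_div, abs_of_pos hpos]
    _ ≤ (16*s*(8*s+y^2)^3) / (16*s^2*(8*s+y^2)^3) := by
        exact (div_le_div_iff_of_pos_right hpos).mpr hNbound
    _ = 1/s := by
        field_simp
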